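/- Let β be a complex number with |β| > 1 and let A ⊂ ℤ[β] be a finite set containing 0 such that every natural number N can be written as a finite sum N = Σ_{i=-m}^{n} a_i β^i with digits a_i ∈ A. Then β is an algebraic number (over ℚ). -/

import Mathlib

noncomputable section

/-- `ℤ[β]`: the smallest subring of `ℂ` containing `β` (and hence `ℤ`). -/
def Zring (β : ℂ) : Subring ℂ := Subring.closure {β}

/-- `x` has a finite `(β, A)`-representation `x = ∑_{j=-m}^{n} a_j β^j` with digits in `A`. -/
def FinRep (β : ℂ) (A : Set ℂ) (x : ℂ) : Prop :=
  ∃ (m n : ℕ) (a : ℤ → ℂ), (∀ j, a j ∈ A) ∧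
    x = ∑ j ∈ Finset.Icc (-(m : ℤ)) (n : ℤ), a j * β ^ j

set_option maxHeartbeats 1000000 in
theorem stmt0 (β : ℂ) (hβ : 1 < ‖β‖) (A : Set ℂ) (hAfin : A.Finite)
    (h0 : (0 : ℂ) ∈ A) (hA : A ⊆ (Zring β : Set ℂ))
    (hrep : ∀ N : ℕ, FinRep β A (N : ℂ)) :
    IsAlgebraic ℚ β := by
  classical
  by_contra hcon
  have hβ0 : β ≠ 0 := by
    intro h; rw [h] at hβ; simp at hβ; linarith
  -- transcendence over ℤ
  have htr : ∀ p : Polynomial ℤ, Polynomial.aeval β p = 0 → p = 0 := by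
    intro p hp
    by_contra hne
    apply hcon
    refine ⟨p.map (algebraMap ℤ ℚ), ?_, ?_⟩
    · exact (Polynomial.map_ne_zero_iff (algebraMap ℤ ℚ).injective_int).mpr hne
    · rw [Polynomial.aeval_map_algebraMap]; exact hp
  -- each digit is an integer polynomial in β
  have hmem : ∀ a ∈ A, ∃ p : Polynomial ℤ, Polynomial.aeval β p = a := by
    intro a ha
    have h1 : a ∈ Algebra.adjoin ℤ ({β} : Set ℂ) := by
      rw [Algebra.adjoin_int]; exact hA ha
    rw [Algebra.adjoin_singleton_eq_range_aeval] at h1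
    obtain ⟨p, hp⟩ := h1
    exact ⟨p, hp⟩
  choose! P hP using hmem
  set F := hAfin.toFinset with hF
  set D : ℕ := F.sup (fun a => (P a).natDegree) with hDdef
  set H : ℕ := F.sup (fun a => (P a).support.sup (fun k => ((P a).coeff k).natAbs)) with hHdef
  have hD : ∀ a ∈ A, (P a).natDegree ≤ D := fun a ha =>
    Finset.le_sup (f := fun a => (P a).natDegree) (hAfin.mem_toFinset.mpr ha)
  have hH : ∀ a ∈ A, ∀ k, |(P a).coeff k| ≤ (H : ℤ) := by
    intro a ha k
    by_cases hk : k ∈ (P a).support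
    · have h1 : ((P a).coeff k).natAbs ≤ (P a).support.sup (fun k => ((P a).coeff k).natAbs) :=
        Finset.le_sup (f := fun k => ((P a).coeff k).natAbs) hk
      have h2 : (P a).support.sup (fun k => ((P a).coeff k).natAbs) ≤ H :=
        Finset.le_sup (f := fun a => (P a).support.sup (fun k => ((P a).coeff k).natAbs))
          (hAfin.mem_toFinset.mpr ha)
      rw [Int.abs_eq_natAbs]
      exact_mod_cast le_trans h1 h2
    · rw [Polynomial.notMem_support_iff.mp hk]; simp
  set N : ℕ := (D + 1) * H + 1 with hNdef
  obtain ⟨m, n, a, haA, hsum⟩ := hrep N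
  set S := Finset.Icc (-(m : ℤ)) (n : ℤ) with hS
  set Q : Polynomial ℤ := ∑ j ∈ S, P (a j) * Polynomial.X ^ (j + m).toNat with hQ
  -- evaluation of Q
  have hQeval : Polynomial.aeval β Q = (N : ℂ) * β ^ m := by
    rw [hQ, map_sum]
    have : ∀ j ∈ S, Polynomial.aeval β (P (a j) * Polynomial.X ^ (j + m).toNat)
        = a j * β ^ j * β ^ m := by
      intro j hj
      have hj' : (-(m:ℤ)) ≤ j := (Finset.mem_Icc.mp hj).1
      have hnn : (0:ℤ) ≤ j + m := by omega
      rw [map_mul, map_pow, Polynomial.aeval_X, hP (a j) (haA j)]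
      have h2 : (β ^ ((j + m).toNat) : ℂ) = β ^ ((j : ℤ) + m) := by
        rw [← zpow_natCast, Int.toNat_of_nonneg hnn]
      rw [h2, zpow_add₀ hβ0, zpow_natCast, ← mul_assoc]
    rw [Finset.sum_congr rfl this, hsum, Finset.sum_mul]
  have heq : Q = Polynomial.C ((N : ℕ) : ℤ) * Polynomial.X ^ m := by
    have h0 : Polynomial.aeval β (Q - Polynomial.C ((N : ℕ) : ℤ) * Polynomial.X ^ m) = 0 := by
      rw [map_sub, map_mul, map_pow, Polynomial.aeval_X, Polynomial.aeval_C, hQeval]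
      push_cast
      ring
    exact sub_eq_zero.mp (htr _ h0)
  -- compare coefficient at m
  have hcoeff : ((N : ℕ) : ℤ) = Q.coeff m := by
    rw [heq, Polynomial.coeff_C_mul, Polynomial.coeff_X_pow, if_pos rfl, mul_one]
  set T := S ∩ Finset.Icc (-(D : ℤ)) 0 with hT
  have hQc : Q.coeff m = ∑ j ∈ T, (P (a j) * Polynomial.X ^ (j + m).toNat).coeff m := by
    rw [hQ, Polynomial.finset_sum_coeff]
    refine (Finset.sum_subset Finset.inter_subset_left ?_).symm
    intro j hjS hjT
    have hj' : (-(m:ℤ)) ≤ j ∧ j ≤ n := Finset.mem_Icc.mp hjS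
    have hjD : j < -(D:ℤ) ∨ 0 < j := by
      by_contra hcon2
      push_neg at hcon2
      exact hjT (Finset.mem_inter.mpr ⟨hjS, Finset.mem_Icc.mpr ⟨by omega, by omega⟩⟩)
    rw [Polynomial.coeff_mul_X_pow']
    split_ifs with hle
    · have hk : ((j + m).toNat : ℤ) = j + m := Int.toNat_of_nonneg (by omega)
      apply Polynomial.coeff_eq_zero_of_natDegree_lt
      have h1 : (P (a j)).natDegree ≤ D := hD _ (haA j)
      omega
    · rfl
  have habs : ((N : ℕ) : ℤ) ≤ (T.card : ℤ) * H := by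
    rw [hcoeff, hQc]
    refine le_trans (le_abs_self _) (le_trans (Finset.abs_sum_le_sum_abs _ _) ?_)
    have hb : ∀ j ∈ T, |(P (a j) * Polynomial.X ^ (j + m).toNat).coeff m| ≤ (H : ℤ) := by
      intro j hj
      rw [Polynomial.coeff_mul_X_pow']
      split_ifs with hle
      · exact hH _ (haA j) _
      · simp
    calc (∑ j ∈ T, |(P (a j) * Polynomial.X ^ (j + m).toNat).coeff m|)
        ≤ ∑ _j ∈ T, (H : ℤ) := Finset.sum_le_sum hb
      _ = (T.card : ℤ) * H := by rw [Finset.sum_const, nsmul_eq_mul]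
  have hcard : T.card ≤ D + 1 := by
    calc T.card ≤ (Finset.Icc (-(D : ℤ)) 0).card := Finset.card_le_card Finset.inter_subset_right
      _ = D + 1 := by rw [Int.card_Icc]; omega
  have : ((N : ℕ) : ℤ) ≤ ((D : ℤ) + 1) * H := by
    refine le_trans habs ?_
    have : (T.card : ℤ) ≤ (D : ℤ) + 1 := by exact_mod_cast hcard
    have hHnn : (0:ℤ) ≤ (H:ℤ) := by positivity
    nlinarith
  rw [hNdef] at this
  push_cast at this
  omega
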